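/- arXiv:1102.5386 — 2 statements merged into one kernel-verified Lean document; each statement's English description precedes it below -/
import Mathlib

section
/- For any junction tree of a graph, running the LP with beliefs on the maximal cliques and enforcing consistency on clique intersections gives an LP whose optimal value equals the IP optimal value (the LP is tight on a junction tree). -/
open Finset

lemma exists_leaf {V : Type*} [Fintype V] (G : SimpleGraph V) (hG : G.IsTree)
    (h2 : 2 ≤ Fintype.card V) :
    ∃ ℓ m : V, G.Adj ℓ m ∧ ∀ w, G.Adj ℓ w → w = m := by
  classical
  set S : Set ℕ := {L | ∃ (u v : V) (p : G.Walk u v), p.IsPath ∧ p.length = L} with hS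
  have hSne : S.Nonempty := by
    obtain ⟨u, v, huv⟩ := Fintype.exists_pair_of_one_lt_card (α := V) (by omega)
    obtain ⟨w⟩ := hG.isConnected u v
    exact ⟨w.toPath.1.length, u, v, w.toPath.1, w.toPath.2, rfl⟩
  have hSbdd : BddAbove S := by
    refine ⟨Fintype.card V, ?_⟩
    rintro L ⟨u, v, p, hp, rfl⟩
    exact le_of_lt hp.length_lt
  obtain ⟨u, v, p, hp, hlen⟩ := Nat.sSup_mem hSne hSbdd
  have hmax : ∀ L ∈ S, L ≤ p.length := by
    intro L hL; rw [hlen]; exact le_csSup hSbdd hL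
  have hpos : 1 ≤ p.length := by
    by_contra h
    push_neg at h
    interval_cases hl : p.length
    · -- length 0: u = v, but then any pair gives a longer path
      obtain ⟨a, b, hab⟩ := Fintype.exists_pair_of_one_lt_card (α := V) (by omega)
      obtain ⟨w⟩ := hG.isConnected a b
      have : w.toPath.1.length ∈ S := ⟨a, b, w.toPath.1, w.toPath.2, rfl⟩
      have h1 := hmax _ this
      have : w.toPath.1.length ≠ 0 := by
        intro h0
        exact hab (SimpleGraph.Walk.eq_of_length_eq_zero h0)
      omega
  cases p with
  | nil => simp at hpos
  | cons h q =>
    rename_i s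
    refine ⟨u, s, h, ?_⟩
    intro w hw
    by_contra hws
    have hwu : w ≠ u := hw.ne'
    by_cases hmem : w ∈ (SimpleGraph.Walk.cons h q).support
    · -- cycle
      set p' : G.Walk u v := SimpleGraph.Walk.cons h q
      have hq' : (p'.takeUntil w hmem).IsPath := hp.takeUntil hmem
      have hedge : s(u, w) ∉ (p'.takeUntil w hmem).edges := by
        intro he
        have he' : s(u, w) ∈ p'.edges := SimpleGraph.Walk.edges_takeUntil_subset _ hmem he
        simp only [p', SimpleGraph.Walk.edges_cons, List.mem_cons] at he'
        rcases he' with he' | he'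
        · rw [Sym2.eq_iff] at he'
          rcases he' with ⟨-, h2⟩ | ⟨h1, h2⟩
          · exact hws h2
          · exact hw.ne' h2
        · have : u ∈ q.support := SimpleGraph.Walk.fst_mem_support_of_mem_edges q he'
          have := hp.support_nodup
          simp only [p', SimpleGraph.Walk.support_cons, List.nodup_cons] at this
          exact this.1 ‹u ∈ q.support›
      have hcyc : (SimpleGraph.Walk.cons hw (p'.takeUntil w hmem).reverse).IsCycle := by
        rw [SimpleGraph.Walk.cons_isCycle_iff]
        refine ⟨hq'.reverse, ?_⟩
        rw [SimpleGraph.Walk.edges_reverse, List.mem_reverse]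
        exact hedge
      exact hG.IsAcyclic _ hcyc
    · -- extend the path
      have hext : (SimpleGraph.Walk.cons hw.symm (SimpleGraph.Walk.cons h q)).IsPath := by
        rw [SimpleGraph.Walk.cons_isPath_iff]
        exact ⟨hp, hmem⟩
      have : (SimpleGraph.Walk.cons hw.symm (SimpleGraph.Walk.cons h q)).length ∈ S :=
        ⟨w, v, _, hext, rfl⟩
      have := hmax _ this
      simp [SimpleGraph.Walk.length_cons] at this

lemma leaf_walk_mem {V : Type*} {G : SimpleGraph V} {ℓ m : V}
    (hleaf : ∀ w, G.Adj ℓ w → w = m) {i : V} (w : G.Walk ℓ i) (hi : i ≠ ℓ) :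
    m ∈ w.support := by
  cases w with
  | nil => exact absurd rfl hi
  | cons h q =>
    rename_i c
    have := hleaf c h
    subst this
    simp [SimpleGraph.Walk.support_cons, SimpleGraph.Walk.start_mem_support]

lemma leaf_not_mem_path {V : Type*} {G : SimpleGraph V} {ℓ m : V}
    (hadj : G.Adj ℓ m) (hleaf : ∀ w, G.Adj ℓ w → w = m) {u v : V}
    (p : G.Walk u v) (hp : p.IsPath) (hu : u ≠ ℓ) (hv : v ≠ ℓ) : ℓ ∉ p.support := by
  classical
  intro hmem
  have hml : m ≠ ℓ := hadj.ne'
  have hq : m ∈ (p.takeUntil ℓ hmem).support := by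
    have := leaf_walk_mem hleaf (p.takeUntil ℓ hmem).reverse hu
    rwa [SimpleGraph.Walk.support_reverse, List.mem_reverse] at this
  have hr : m ∈ (p.dropUntil ℓ hmem).support.tail := by
    have h1 : m ∈ (p.dropUntil ℓ hmem).support := leaf_walk_mem hleaf _ hv
    rw [SimpleGraph.Walk.support_eq_cons, List.mem_cons] at h1
    rcases h1 with h1 | h1
    · exact absurd h1 hml
    · exact h1
  have hnd := hp.support_nodup
  rw [← SimpleGraph.Walk.take_spec p hmem, SimpleGraph.Walk.support_append,
    List.nodup_append] at hnd
  exact hnd.2.2 m hq m hr rfl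

def subHom {V : Type*} (G : SimpleGraph V) (ℓ : V) :
    (G.comap (Subtype.val : {i : V // i ≠ ℓ} → V)) →g G :=
  ⟨Subtype.val, id⟩

lemma subtree {V : Type*} [Fintype V] {G : SimpleGraph V} (hG : G.IsTree) {ℓ m : V}
    (hadj : G.Adj ℓ m) (hleaf : ∀ w, G.Adj ℓ w → w = m) :
    (G.comap (Subtype.val : {i : V // i ≠ ℓ} → V)).IsTree := by
  classical
  set G' := G.comap (Subtype.val : {i : V // i ≠ ℓ} → V) with hG'
  have hlift : ∀ (a b : V) (w : G.Walk a b), ℓ ∉ w.support →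
      ∀ (ha : a ≠ ℓ) (hb : b ≠ ℓ), G'.Reachable ⟨a, ha⟩ ⟨b, hb⟩ := by
    intro a b w
    induction w with
    | nil => intro _ ha hb; exact SimpleGraph.Reachable.refl _
    | cons h q ih =>
      rename_i x y z
      intro hsup hx hz
      rw [SimpleGraph.Walk.support_cons, List.mem_cons] at hsup
      push_neg at hsup
      have hy : y ≠ ℓ := fun hy => hsup.2 (hy ▸ q.start_mem_support)
      have : G'.Adj ⟨x, hx⟩ ⟨y, hy⟩ := h
      exact this.reachable.trans (ih hsup.2 hy hz)
  constructor
  · haveI : Nonempty {i : V // i ≠ ℓ} := ⟨⟨m, hadj.ne'⟩⟩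
    refine SimpleGraph.Connected.mk ?_
    rintro ⟨u, hu⟩ ⟨v, hv⟩
    obtain ⟨w⟩ := hG.isConnected u v
    exact hlift u v w.toPath.1
      (leaf_not_mem_path hadj hleaf _ w.toPath.2 hu hv) hu hv
  · intro v c hc
    exact hG.IsAcyclic _ (hc.map (f := subHom G ℓ) Subtype.val_injective)

universe u
set_option maxHeartbeats 2000000 in

lemma key (n : ℕ) (N : ℕ) : ∀ (ι : Type u) (inst : Fintype ι) (T : SimpleGraph ι),
    Fintype.card ι = N → T.IsTree →
    ∀ (C : ι → Finset (Fin n))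
    (_ : ∀ (i j : ι) (p : T.Walk i j), p.IsPath → ∀ k ∈ p.support, C i ∩ C j ⊆ C k)
    (θ : (i : ι) → ({ v // v ∈ C i } → Bool) → ℝ)
    (b : (i : ι) → ({ v // v ∈ C i } → Bool) → ℝ),
    (∀ i xC, 0 ≤ b i xC) → (∀ i, ∑ xC, b i xC = 1) →
    (∀ i j : ι, T.Adj i j → ∀ z : { v // v ∈ C i ∩ C j } → Bool,
          (∑ xC ∈ Finset.univ.filter (fun xC : { v // v ∈ C i } → Bool =>
              ∀ v : { v // v ∈ C i ∩ C j },
                xC ⟨v.1, (Finset.mem_inter.mp v.2).1⟩ = z v), b i xC) =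
          (∑ xC ∈ Finset.univ.filter (fun xC : { v // v ∈ C j } → Bool =>
              ∀ v : { v // v ∈ C i ∩ C j },
                xC ⟨v.1, (Finset.mem_inter.mp v.2).2⟩ = z v), b j xC)) →
    ∃ x : Fin n → Bool, (∑ i, θ i (fun v => x v.1)) ≤ ∑ i, ∑ xC, θ i xC * b i xC := by
  induction N using Nat.strong_induction_on with
  | _ N IH =>
  intro ι inst T hcard hT C hRIP θ b hb0 hb1 hbc
  classical
  haveI : Nonempty ι := hT.isConnected.nonempty
  by_cases h2 : 2 ≤ Fintype.card ι
  · -- inductive step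
    obtain ⟨ℓ, m, hadj, hleaf⟩ := exists_leaf T hT h2
    have hml : m ≠ ℓ := hadj.ne'
    set ι' := {i : ι // i ≠ ℓ} with hι'
    set T' := T.comap (Subtype.val : ι' → ι) with hT'def
    have hT'tree : T'.IsTree := subtree hT hadj hleaf
    have hcard' : Fintype.card ι' = N - 1 := by
      have h1 : Fintype.card ι' = Fintype.card ι - Fintype.card {x : ι // x = ℓ} :=
        Fintype.card_subtype_compl _
      rw [Fintype.card_subtype_eq] at h1
      omega
    -- the nonempty fibers
    have hSne : ∀ z : { v // v ∈ C ℓ ∩ C m } → Bool,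
        (Finset.univ.filter (fun xC : { v // v ∈ C ℓ } → Bool =>
          ∀ v : { v // v ∈ C ℓ ∩ C m },
            xC ⟨v.1, (Finset.mem_inter.mp v.2).1⟩ = z v)).Nonempty := by
      intro z
      refine ⟨fun w => if hw : w.1 ∈ C ℓ ∩ C m then z ⟨w.1, hw⟩ else true, ?_⟩
      simp only [Finset.mem_filter, Finset.mem_univ, true_and]
      intro v
      rw [dif_pos v.2]
    set g : ({ v // v ∈ C ℓ ∩ C m } → Bool) → ℝ := fun z =>
      (Finset.univ.filter (fun xC : { v // v ∈ C ℓ } → Bool =>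
        ∀ v : { v // v ∈ C ℓ ∩ C m },
          xC ⟨v.1, (Finset.mem_inter.mp v.2).1⟩ = z v)).inf' (hSne z) (θ ℓ) with hg
    -- filters in function-equality form agree with the ∀-form
    have hfiltℓ : ∀ z : { v // v ∈ C ℓ ∩ C m } → Bool,
        (Finset.univ.filter (fun xC : { v // v ∈ C ℓ } → Bool =>
          (fun v : { v // v ∈ C ℓ ∩ C m } => xC ⟨v.1, (Finset.mem_inter.mp v.2).1⟩) = z)) =
        (Finset.univ.filter (fun xC : { v // v ∈ C ℓ } → Bool =>
          ∀ v : { v // v ∈ C ℓ ∩ C m }, xC ⟨v.1, (Finset.mem_inter.mp v.2).1⟩ = z v)) := by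
      intro z
      apply Finset.filter_congr
      intro xC _
      simp [funext_iff]
    have hfiltm : ∀ z : { v // v ∈ C ℓ ∩ C m } → Bool,
        (Finset.univ.filter (fun xC : { v // v ∈ C m } → Bool =>
          (fun v : { v // v ∈ C ℓ ∩ C m } => xC ⟨v.1, (Finset.mem_inter.mp v.2).2⟩) = z)) =
        (Finset.univ.filter (fun xC : { v // v ∈ C m } → Bool =>
          ∀ v : { v // v ∈ C ℓ ∩ C m }, xC ⟨v.1, (Finset.mem_inter.mp v.2).2⟩ = z v)) := by
      intro z
      apply Finset.filter_congr
      intro xC _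
      simp [funext_iff]
    -- key inequality: the leaf term dominates the folded term
    have hKI1 : ∑ xm : { v // v ∈ C m } → Bool,
        g (fun v => xm ⟨v.1, (Finset.mem_inter.mp v.2).2⟩) * b m xm
        ≤ ∑ xl : { v // v ∈ C ℓ } → Bool, θ ℓ xl * b ℓ xl := by
      calc ∑ xm : { v // v ∈ C m } → Bool,
            g (fun v => xm ⟨v.1, (Finset.mem_inter.mp v.2).2⟩) * b m xm
          = ∑ z : { v // v ∈ C ℓ ∩ C m } → Bool,
            ∑ xm ∈ Finset.univ.filter (fun xm : { v // v ∈ C m } → Bool =>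
              (fun v : { v // v ∈ C ℓ ∩ C m } => xm ⟨v.1, (Finset.mem_inter.mp v.2).2⟩) = z),
              g (fun v => xm ⟨v.1, (Finset.mem_inter.mp v.2).2⟩) * b m xm := by
            rw [Finset.sum_fiberwise]
        _ = ∑ z : { v // v ∈ C ℓ ∩ C m } → Bool,
            g z * ∑ xm ∈ Finset.univ.filter (fun xm : { v // v ∈ C m } → Bool =>
              ∀ v : { v // v ∈ C ℓ ∩ C m },
                xm ⟨v.1, (Finset.mem_inter.mp v.2).2⟩ = z v), b m xm := by
            refine Finset.sum_congr rfl (fun z _ => ?_)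
            rw [hfiltm z, Finset.mul_sum]
            refine Finset.sum_congr rfl (fun xm hxm => ?_)
            rw [Finset.mem_filter] at hxm
            congr 1
            congr 1
            funext v
            exact hxm.2 v
        _ = ∑ z : { v // v ∈ C ℓ ∩ C m } → Bool,
            g z * ∑ xl ∈ Finset.univ.filter (fun xl : { v // v ∈ C ℓ } → Bool =>
              ∀ v : { v // v ∈ C ℓ ∩ C m },
                xl ⟨v.1, (Finset.mem_inter.mp v.2).1⟩ = z v), b ℓ xl := by
            refine Finset.sum_congr rfl (fun z _ => ?_)
            rw [hbc ℓ m hadj z]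
        _ ≤ ∑ z : { v // v ∈ C ℓ ∩ C m } → Bool,
            ∑ xl ∈ Finset.univ.filter (fun xl : { v // v ∈ C ℓ } → Bool =>
              ∀ v : { v // v ∈ C ℓ ∩ C m },
                xl ⟨v.1, (Finset.mem_inter.mp v.2).1⟩ = z v), θ ℓ xl * b ℓ xl := by
            refine Finset.sum_le_sum (fun z _ => ?_)
            rw [Finset.mul_sum]
            refine Finset.sum_le_sum (fun xl hxl => ?_)
            exact mul_le_mul_of_nonneg_right (Finset.inf'_le _ hxl) (hb0 _ _)
        _ = ∑ xl : { v // v ∈ C ℓ } → Bool, θ ℓ xl * b ℓ xl := by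
            rw [← Finset.sum_fiberwise (Finset.univ : Finset ({ v // v ∈ C ℓ } → Bool))
              (fun xl => (fun v : { v // v ∈ C ℓ ∩ C m } =>
                xl ⟨v.1, (Finset.mem_inter.mp v.2).1⟩))
              (fun xl => θ ℓ xl * b ℓ xl)]
            exact Finset.sum_congr rfl (fun z _ => by rw [hfiltℓ z])
    -- reduced instance
    set C' : ι' → Finset (Fin n) := fun i => C i.1 with hC'
    set θ' : (i : ι') → ({ v // v ∈ C' i } → Bool) → ℝ := fun i xC =>
      θ i.1 xC + (if h : i.1 = m then
        g (fun v => xC ⟨v.1, (by simp only [hC']; rw [h]; exact (Finset.mem_inter.mp v.2).2 : v.1 ∈ C' i)⟩) else 0) with hθ'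
    have hRIP' : ∀ (i j : ι') (p : T'.Walk i j), p.IsPath →
        ∀ k ∈ p.support, C' i ∩ C' j ⊆ C' k := by
      intro i j p hp k hk
      exact hRIP i.1 j.1 (p.map (subHom T ℓ))
        (SimpleGraph.Walk.map_isPath_of_injective Subtype.val_injective hp) k.1
        (by
          have h : (subHom T ℓ) k ∈ (p.map (subHom T ℓ)).support := by
            rw [SimpleGraph.Walk.support_map]; exact List.mem_map.mpr ⟨k, hk, rfl⟩
          exact h)
    obtain ⟨x, hx⟩ := IH (N - 1) (by omega) ι' inferInstance T' hcard' hT'tree C' hRIP' θ'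
      (fun i xC => b i.1 xC) (fun i xC => hb0 i.1 xC) (fun i => hb1 i.1)
      (fun i j hij z => hbc i.1 j.1 hij z)
    -- the extra-term computations
    have hm' : (⟨m, hml⟩ : ι') ∈ (Finset.univ : Finset ι') := Finset.mem_univ _
    have hzero : ∀ (j : ι'), j ≠ ⟨m, hml⟩ → ∀ xC : { v // v ∈ C' j } → Bool,
        (if h : j.1 = m then
          g (fun v => xC ⟨v.1, (by simp only [hC']; rw [h]; exact (Finset.mem_inter.mp v.2).2 : v.1 ∈ C' j)⟩) else 0) = 0 := by
      intro j hj xC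
      exact dif_neg (fun hc => hj (Subtype.ext hc))
    -- pointwise version
    have hUse1 : ∑ i : ι', θ' i (fun v => x v.1)
        = (∑ i : ι', θ i.1 (fun v => x v.1)) + g (fun v => x v.1) := by
      have : ∑ i : ι', θ' i (fun v => x v.1)
          = ∑ i : ι', (θ i.1 (fun v => x v.1) + (if h : i.1 = m then
              g (fun v => x v.1) else 0)) := by
        refine Finset.sum_congr rfl (fun i _ => ?_)
        simp only [hθ']
        rfl
      rw [this, Finset.sum_add_distrib]
      congr 1
      rw [Finset.sum_eq_single_of_mem (⟨m, hml⟩ : ι') hm'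
        (fun j _ hj => dif_neg (fun hc => hj (Subtype.ext hc)))]
      rw [dif_pos rfl]
    -- weighted version
    have hUse2 : ∑ i : ι', ∑ xC, θ' i xC * b i.1 xC
        = (∑ i : ι', ∑ xC, θ i.1 xC * b i.1 xC)
          + ∑ xm : { v // v ∈ C m } → Bool,
              g (fun v => xm ⟨v.1, (Finset.mem_inter.mp v.2).2⟩) * b m xm := by
      have h1 : ∀ i : ι', ∑ xC, θ' i xC * b i.1 xC
          = (∑ xC, θ i.1 xC * b i.1 xC)
            + ∑ xC, (if h : i.1 = m then
                g (fun v => xC ⟨v.1, (by simp only [hC']; rw [h]; exact (Finset.mem_inter.mp v.2).2 : v.1 ∈ C' i)⟩) else 0)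
              * b i.1 xC := by
        intro i
        rw [← Finset.sum_add_distrib]
        refine Finset.sum_congr rfl (fun xC _ => ?_)
        rw [hθ', add_mul]
      rw [Finset.sum_congr rfl (fun i _ => h1 i), Finset.sum_add_distrib]
      congr 1
      rw [Finset.sum_eq_single_of_mem (⟨m, hml⟩ : ι') hm'
        (fun j _ hj => by
          refine Finset.sum_eq_zero (fun xC _ => ?_)
          rw [hzero j hj xC, zero_mul])]
      refine Finset.sum_congr rfl (fun xm _ => ?_)
      rw [dif_pos rfl]
    -- the optimal completion on the leaf clique
    obtain ⟨xhat, hhmem, hh⟩ := Finset.exists_mem_eq_inf'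
      (hSne (fun v => x v.1)) (θ ℓ)
    rw [Finset.mem_filter] at hhmem
    have hhat := hhmem.2
    set xstar : Fin n → Bool := fun w =>
      if hw : w ∈ C ℓ then (if w ∈ C m then x w else xhat ⟨w, hw⟩) else x w with hxstar
    have ha : (fun v : { v // v ∈ C ℓ } => xstar v.1) = xhat := by
      funext v
      rw [hxstar]
      simp only [dif_pos v.2]
      by_cases hvm : v.1 ∈ C m
      · rw [if_pos hvm, ← hhat ⟨v.1, Finset.mem_inter.mpr ⟨v.2, hvm⟩⟩]
      · rw [if_neg hvm]
    have hb' : ∀ i : ι, i ≠ ℓ →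
        (fun v : { v // v ∈ C i } => xstar v.1) = (fun v => x v.1) := by
      intro i hi
      funext v
      rw [hxstar]
      by_cases hvl : v.1 ∈ C ℓ
      · have hvm : v.1 ∈ C m := by
          obtain ⟨w⟩ := hT.isConnected ℓ i
          have hmm := leaf_walk_mem hleaf w.toPath.1 hi
          exact hRIP ℓ i w.toPath.1 w.toPath.2 m hmm (Finset.mem_inter.mpr ⟨hvl, v.2⟩)
        simp only [dif_pos hvl, if_pos hvm]
      · simp only [dif_neg hvl]
    -- subtype sum decomposition
    have hsubty : ∀ (f : ι → ℝ), ∑ i : ι, f i = f ℓ + ∑ i : ι', f i.1 := by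
      intro f
      rw [← Finset.add_sum_erase _ f (Finset.mem_univ ℓ)]
      congr 1
      exact Finset.sum_subtype (Finset.univ.erase ℓ)
        (fun x => by simp [Finset.mem_erase]) f
    refine ⟨xstar, ?_⟩
    rw [hsubty (fun i => θ i (fun v => xstar v.1)),
        hsubty (fun i => ∑ xC, θ i xC * b i xC)]
    have e1 : θ ℓ (fun v => xstar v.1) = g (fun v => x v.1) := by
      rw [ha, hg]
      exact hh.symm
    have e2 : ∑ i : ι', θ i.1 (fun v : { v // v ∈ C i.1 } => xstar v.1)
        = ∑ i : ι', θ i.1 (fun v => x v.1) :=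
      Finset.sum_congr rfl (fun i _ => by rw [hb' i.1 i.2])
    calc θ ℓ (fun v => xstar v.1) + ∑ i : ι', θ i.1 (fun v => xstar v.1)
        = g (fun v => x v.1) + ∑ i : ι', θ i.1 (fun v => x v.1) := by rw [e1, e2]
      _ = ∑ i : ι', θ' i (fun v => x v.1) := by rw [hUse1, add_comm]
      _ ≤ ∑ i : ι', ∑ xC, θ' i xC * b i.1 xC := hx
      _ = (∑ i : ι', ∑ xC, θ i.1 xC * b i.1 xC)
          + ∑ xm : { v // v ∈ C m } → Bool,
              g (fun v => xm ⟨v.1, (Finset.mem_inter.mp v.2).2⟩) * b m xm := hUse2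
      _ ≤ (∑ i : ι', ∑ xC, θ i.1 xC * b i.1 xC)
          + ∑ xl : { v // v ∈ C ℓ } → Bool, θ ℓ xl * b ℓ xl := by
          exact add_le_add (le_refl _) hKI1
      _ = (∑ xC, θ ℓ xC * b ℓ xC) + ∑ i : ι', ∑ xC, θ i.1 xC * b i.1 xC := by
          rw [add_comm]
  · -- base case: exactly one clique
    obtain ⟨i0⟩ := ‹Nonempty ι›
    have hcard1 : Fintype.card ι ≤ 1 := by omega
    have huniq : ∀ i : ι, i = i0 := fun i => Fintype.card_le_one_iff.mp hcard1 i i0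
    have hne : (Finset.univ : Finset ({v // v ∈ C i0} → Bool)).Nonempty :=
      Finset.univ_nonempty
    obtain ⟨xh, hmem, hxh⟩ := Finset.exists_mem_eq_inf' hne (θ i0)
    refine ⟨fun w => if hw : w ∈ C i0 then xh ⟨w, hw⟩ else true, ?_⟩
    rw [Finset.sum_eq_single_of_mem i0 (Finset.mem_univ _) (fun j _ hj => absurd (huniq j) hj),
        Finset.sum_eq_single_of_mem i0 (Finset.mem_univ _) (fun j _ hj => absurd (huniq j) hj)]
    have hres : (fun v : {v // v ∈ C i0} =>
        if hw : v.1 ∈ C i0 then xh ⟨v.1, hw⟩ else true) = xh := by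
      funext v; rw [dif_pos v.2]
    rw [hres]
    calc θ i0 xh = θ i0 xh * ∑ xC, b i0 xC := by rw [hb1, mul_one]
      _ = ∑ xC, θ i0 xh * b i0 xC := by rw [Finset.mul_sum]
      _ ≤ ∑ xC, θ i0 xC * b i0 xC := Finset.sum_le_sum (fun xC _ =>
          mul_le_mul_of_nonneg_right (by rw [← hxh]; exact Finset.inf'_le _ (Finset.mem_univ xC))
            (hb0 _ _))


/-- The LP over the maximal cliques of a junction tree (with consistency enforced on
clique intersections along tree edges) is tight: its optimal value equals the optimal
value of the integer program `min_{x ∈ {±1}^n} ∑_C θ_C(x_C)`. -/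
theorem stmt14 (n : ℕ) (ι : Type*) [Fintype ι] (T : SimpleGraph ι) (hT : T.IsTree)
    (C : ι → Finset (Fin n))
    (hRIP : ∀ (i j : ι) (p : T.Walk i j), p.IsPath → ∀ k ∈ p.support, C i ∩ C j ⊆ C k)
    (θ : (i : ι) → ({ v // v ∈ C i } → Bool) → ℝ) :
    sInf {val : ℝ | ∃ b : (i : ι) → ({ v // v ∈ C i } → Bool) → ℝ,
        (∀ i xC, 0 ≤ b i xC) ∧ (∀ i, ∑ xC, b i xC = 1) ∧
        (∀ i j : ι, T.Adj i j → ∀ z : { v // v ∈ C i ∩ C j } → Bool,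
          (∑ xC ∈ Finset.univ.filter (fun xC : { v // v ∈ C i } → Bool =>
              ∀ v : { v // v ∈ C i ∩ C j },
                xC ⟨v.1, (Finset.mem_inter.mp v.2).1⟩ = z v), b i xC) =
          (∑ xC ∈ Finset.univ.filter (fun xC : { v // v ∈ C j } → Bool =>
              ∀ v : { v // v ∈ C i ∩ C j },
                xC ⟨v.1, (Finset.mem_inter.mp v.2).2⟩ = z v), b j xC)) ∧
        (∑ i, ∑ xC, θ i xC * b i xC) = val} =
      sInf {val : ℝ | ∃ x : Fin n → Bool, (∑ i, θ i (fun v => x v.1)) = val} := by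
  classical
  set SIP := {val : ℝ | ∃ x : Fin n → Bool, (∑ i, θ i (fun v => x v.1)) = val} with hSIP
  set SLP := {val : ℝ | ∃ b : (i : ι) → ({ v // v ∈ C i } → Bool) → ℝ,
        (∀ i xC, 0 ≤ b i xC) ∧ (∀ i, ∑ xC, b i xC = 1) ∧
        (∀ i j : ι, T.Adj i j → ∀ z : { v // v ∈ C i ∩ C j } → Bool,
          (∑ xC ∈ Finset.univ.filter (fun xC : { v // v ∈ C i } → Bool =>
              ∀ v : { v // v ∈ C i ∩ C j },
                xC ⟨v.1, (Finset.mem_inter.mp v.2).1⟩ = z v), b i xC) =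
          (∑ xC ∈ Finset.univ.filter (fun xC : { v // v ∈ C j } → Bool =>
              ∀ v : { v // v ∈ C i ∩ C j },
                xC ⟨v.1, (Finset.mem_inter.mp v.2).2⟩ = z v), b j xC)) ∧
        (∑ i, ∑ xC, θ i xC * b i xC) = val} with hSLP
  have hIPfin : SIP.Finite := by
    have hr : SIP = Set.range (fun x : Fin n → Bool => ∑ i, θ i (fun v => x v.1)) := by
      ext val
      simp [hSIP, Set.mem_setOf_eq, Set.mem_range]
    rw [hr]
    exact Set.finite_range _
  have hIPne : SIP.Nonempty := ⟨_, ⟨fun _ => true, rfl⟩⟩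
  have hIPbdd : BddBelow SIP := hIPfin.bddBelow
  have hsub : SIP ⊆ SLP := by
    rintro val ⟨x, rfl⟩
    refine ⟨fun i xC => if xC = (fun v => x v.1) then 1 else 0, ?_, ?_, ?_, ?_⟩
    · intro i xC
      by_cases h : xC = (fun v => x v.1) <;> simp [h]
    · intro i
      rw [Finset.sum_ite_eq' Finset.univ (fun v : { v // v ∈ C i } => x v.1)
        (fun _ => (1 : ℝ))]
      simp
    · intro i j hij z
      rw [Finset.sum_ite_eq', Finset.sum_ite_eq']
      simp only [Finset.mem_filter, Finset.mem_univ, true_and]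
    · refine Finset.sum_congr rfl (fun i _ => ?_)
      simp only [mul_ite, mul_one, mul_zero]
      rw [Finset.sum_ite_eq' Finset.univ (fun v : { v // v ∈ C i } => x v.1) (θ i)]
      simp
  have hLPne : SLP.Nonempty := hIPne.mono hsub
  have hlb : ∀ val ∈ SLP, sInf SIP ≤ val := by
    rintro val ⟨b, hb0, hb1, hbc, rfl⟩
    obtain ⟨x, hx⟩ := key n (Fintype.card ι) ι inferInstance T rfl hT C hRIP θ b hb0 hb1 hbc
    exact le_trans (csInf_le hIPbdd ⟨x, rfl⟩) hx
  have hLPbdd : BddBelow SLP := ⟨sInf SIP, fun v hv => hlb v hv⟩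
  exact le_antisymm (csInf_le_csInf hLPbdd hIPne hsub) (le_csInf hLPne hlb)
end

section
/- For two consistent beliefs on adjacent cliques of a tree of two cliques C₁, C₂ with separator S = C₁ ∩ C₂, there exists a joint distribution on x_{C₁∪C₂} whose marginals on C₁ and C₂ are the given beliefs, namely μ(x) = b_{C₁}(x_{C₁}) b_{C₂}(x_{C₂}) / b_S(x_S) (with the convention 0/0 = 0). -/
open Finset

noncomputable def jointMu (ι : Type*) [DecidableEq ι] (C₁ C₂ : Finset ι)
    (b1 : ({ v // v ∈ C₁ } → Bool) → ℝ) (b2 : ({ v // v ∈ C₂ } → Bool) → ℝ)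
    (bS : ({ v // v ∈ C₁ ∩ C₂ } → Bool) → ℝ)
    (x : { v // v ∈ C₁ ∪ C₂ } → Bool) : ℝ :=
  b1 (fun v => x ⟨v.1, Finset.mem_union_left _ v.2⟩) *
    b2 (fun v => x ⟨v.1, Finset.mem_union_right _ v.2⟩) /
    bS (fun v => x ⟨v.1, Finset.mem_union_left _ (Finset.mem_inter.mp v.2).1⟩)

/-- Two consistent clique beliefs on `C₁, C₂` with common separator marginal `b_S`
(`S = C₁ ∩ C₂`) extend to a joint distribution `μ = b₁ b₂ / b_S` on `x_{C₁ ∪ C₂}`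
whose marginals on `C₁` and `C₂` are the given beliefs. -/
theorem stmt15 (ι : Type*) [DecidableEq ι] (C₁ C₂ : Finset ι)
    (b1 : ({ v // v ∈ C₁ } → Bool) → ℝ) (b2 : ({ v // v ∈ C₂ } → Bool) → ℝ)
    (bS : ({ v // v ∈ C₁ ∩ C₂ } → Bool) → ℝ)
    (h1pos : ∀ z, 0 ≤ b1 z) (h1sum : ∑ z, b1 z = 1)
    (h2pos : ∀ z, 0 ≤ b2 z) (h2sum : ∑ z, b2 z = 1)
    (h1marg : ∀ zS : { v // v ∈ C₁ ∩ C₂ } → Bool,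
      bS zS = ∑ z ∈ Finset.univ.filter (fun z : { v // v ∈ C₁ } → Bool =>
        ∀ v : { v // v ∈ C₁ ∩ C₂ }, z ⟨v.1, (Finset.mem_inter.mp v.2).1⟩ = zS v), b1 z)
    (h2marg : ∀ zS : { v // v ∈ C₁ ∩ C₂ } → Bool,
      bS zS = ∑ z ∈ Finset.univ.filter (fun z : { v // v ∈ C₂ } → Bool =>
        ∀ v : { v // v ∈ C₁ ∩ C₂ }, z ⟨v.1, (Finset.mem_inter.mp v.2).2⟩ = zS v), b2 z) :
    (∀ x, 0 ≤ jointMu ι C₁ C₂ b1 b2 bS x) ∧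
    (∑ x, jointMu ι C₁ C₂ b1 b2 bS x = 1) ∧
    (∀ z1 : { v // v ∈ C₁ } → Bool,
      b1 z1 = ∑ x ∈ Finset.univ.filter (fun x : { v // v ∈ C₁ ∪ C₂ } → Bool =>
        ∀ v : { v // v ∈ C₁ }, x ⟨v.1, Finset.mem_union_left _ v.2⟩ = z1 v),
          jointMu ι C₁ C₂ b1 b2 bS x) ∧
    (∀ z2 : { v // v ∈ C₂ } → Bool,
      b2 z2 = ∑ x ∈ Finset.univ.filter (fun x : { v // v ∈ C₁ ∪ C₂ } → Bool =>
        ∀ v : { v // v ∈ C₂ }, x ⟨v.1, Finset.mem_union_right _ v.2⟩ = z2 v),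
          jointMu ι C₁ C₂ b1 b2 bS x) := by
  classical
  set r1 : ({v // v ∈ C₁ ∪ C₂} → Bool) → ({v // v ∈ C₁} → Bool) :=
    fun x v => x ⟨v.1, Finset.mem_union_left _ v.2⟩ with hr1
  set r2 : ({v // v ∈ C₁ ∪ C₂} → Bool) → ({v // v ∈ C₂} → Bool) :=
    fun x v => x ⟨v.1, Finset.mem_union_right _ v.2⟩ with hr2
  set s1 : ({v // v ∈ C₁} → Bool) → ({v // v ∈ C₁ ∩ C₂} → Bool) :=
    fun z v => z ⟨v.1, (Finset.mem_inter.mp v.2).1⟩ with hs1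
  set s2 : ({v // v ∈ C₂} → Bool) → ({v // v ∈ C₁ ∩ C₂} → Bool) :=
    fun z v => z ⟨v.1, (Finset.mem_inter.mp v.2).2⟩ with hs2
  have hmu : ∀ x, jointMu ι C₁ C₂ b1 b2 bS x = b1 (r1 x) * b2 (r2 x) / bS (s1 (r1 x)) :=
    fun x => rfl
  have hss : ∀ x, s1 (r1 x) = s2 (r2 x) := fun x => rfl
  -- bS nonneg, and vanishing lemmas
  have hSpos : ∀ zS, 0 ≤ bS zS := fun zS => by
    rw [h1marg]; exact Finset.sum_nonneg fun z _ => h1pos z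
  have hv1 : ∀ z1, bS (s1 z1) = 0 → b1 z1 = 0 := by
    intro z1 h0
    rw [h1marg] at h0
    refine (Finset.sum_eq_zero_iff_of_nonneg (fun z _ => h1pos z)).mp h0 z1 ?_
    simp [hs1]
  have hv2 : ∀ z2, bS (s2 z2) = 0 → b2 z2 = 0 := by
    intro z2 h0
    rw [h2marg] at h0
    refine (Finset.sum_eq_zero_iff_of_nonneg (fun z _ => h2pos z)).mp h0 z2 ?_
    simp [hs2]
  -- gluing
  set glue : ({v // v ∈ C₁} → Bool) → ({v // v ∈ C₂} → Bool) → ({v // v ∈ C₁ ∪ C₂} → Bool) :=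
    fun z1 z2 v => if h : v.1 ∈ C₁ then z1 ⟨v.1, h⟩
      else z2 ⟨v.1, (Finset.mem_union.mp v.2).resolve_left h⟩ with hglue
  have hg1 : ∀ z1 z2, r1 (glue z1 z2) = z1 := by
    intro z1 z2; funext v; simp [hr1, hglue, v.2]
  have hg2 : ∀ z1 z2, s1 z1 = s2 z2 → r2 (glue z1 z2) = z2 := by
    intro z1 z2 hc; funext v
    by_cases h : v.1 ∈ C₁
    · have hv : v.1 ∈ C₁ ∩ C₂ := Finset.mem_inter.mpr ⟨h, v.2⟩
      have := congrFun hc ⟨v.1, hv⟩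
      simpa [hr2, hglue, h, hs1, hs2] using this
    · simp [hr2, hglue, h]
  have hgx : ∀ z1 (x : {v // v ∈ C₁ ∪ C₂} → Bool), r1 x = z1 → glue z1 (r2 x) = x := by
    intro z1 x hx; funext v
    by_cases h : v.1 ∈ C₁
    · have := congrFun hx ⟨v.1, h⟩
      simp only [hglue, h, dif_pos]
      exact this.symm
    · simp [hglue, hr2, h]
  -- marginal on C₁
  have key1 : ∀ z1 : {v // v ∈ C₁} → Bool,
      b1 z1 = ∑ x ∈ Finset.univ.filter (fun x : { v // v ∈ C₁ ∪ C₂ } → Bool =>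
        ∀ v : { v // v ∈ C₁ }, x ⟨v.1, Finset.mem_union_left _ v.2⟩ = z1 v),
          jointMu ι C₁ C₂ b1 b2 bS x := by
    intro z1
    have hbij : ∑ x ∈ Finset.univ.filter (fun x : { v // v ∈ C₁ ∪ C₂ } → Bool =>
        ∀ v : { v // v ∈ C₁ }, x ⟨v.1, Finset.mem_union_left _ v.2⟩ = z1 v),
          jointMu ι C₁ C₂ b1 b2 bS x
        = ∑ z2 ∈ Finset.univ.filter (fun z : { v // v ∈ C₂ } → Bool =>
        ∀ v : { v // v ∈ C₁ ∩ C₂ }, z ⟨v.1, (Finset.mem_inter.mp v.2).2⟩ = s1 z1 v),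
          b1 z1 * b2 z2 / bS (s1 z1) := by
      refine Finset.sum_bij' (fun x _ => r2 x) (fun z2 _ => glue z1 z2) ?_ ?_ ?_ ?_ ?_
      · intro x hx
        simp only [Finset.mem_filter, Finset.mem_univ, true_and] at hx ⊢
        intro v
        exact hx ⟨v.1, (Finset.mem_inter.mp v.2).1⟩
      · intro z2 hz2
        simp only [Finset.mem_filter, Finset.mem_univ, true_and] at hz2 ⊢
        intro v
        exact congrFun (hg1 z1 z2) v
      · intro x hx
        simp only [Finset.mem_filter, Finset.mem_univ, true_and] at hx
        exact hgx z1 x (funext hx)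
      · intro z2 hz2
        simp only [Finset.mem_filter, Finset.mem_univ, true_and] at hz2
        have hc : s1 z1 = s2 z2 := by
          funext v; exact (hz2 v).symm
        exact hg2 z1 z2 hc
      · intro x hx
        simp only [Finset.mem_filter, Finset.mem_univ, true_and] at hx
        have hx' : r1 x = z1 := funext hx
        rw [hmu, hx']
    rw [hbij]
    rw [← Finset.sum_div, ← Finset.mul_sum, ← h2marg (s1 z1)]
    by_cases h0 : bS (s1 z1) = 0
    · rw [h0, div_zero, hv1 z1 h0]
    · rw [mul_div_assoc, div_self h0, mul_one]
  -- marginal on C₂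
  have key2 : ∀ z2 : {v // v ∈ C₂} → Bool,
      b2 z2 = ∑ x ∈ Finset.univ.filter (fun x : { v // v ∈ C₁ ∪ C₂ } → Bool =>
        ∀ v : { v // v ∈ C₂ }, x ⟨v.1, Finset.mem_union_right _ v.2⟩ = z2 v),
          jointMu ι C₁ C₂ b1 b2 bS x := by
    intro z2
    have hbij : ∑ x ∈ Finset.univ.filter (fun x : { v // v ∈ C₁ ∪ C₂ } → Bool =>
        ∀ v : { v // v ∈ C₂ }, x ⟨v.1, Finset.mem_union_right _ v.2⟩ = z2 v),
          jointMu ι C₁ C₂ b1 b2 bS x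
        = ∑ z1 ∈ Finset.univ.filter (fun z : { v // v ∈ C₁ } → Bool =>
        ∀ v : { v // v ∈ C₁ ∩ C₂ }, z ⟨v.1, (Finset.mem_inter.mp v.2).1⟩ = s2 z2 v),
          b1 z1 * b2 z2 / bS (s2 z2) := by
      refine Finset.sum_bij' (fun x _ => r1 x) (fun z1 _ => glue z1 z2) ?_ ?_ ?_ ?_ ?_
      · intro x hx
        simp only [Finset.mem_filter, Finset.mem_univ, true_and] at hx ⊢
        intro v
        exact hx ⟨v.1, (Finset.mem_inter.mp v.2).2⟩
      · intro z1 hz1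
        simp only [Finset.mem_filter, Finset.mem_univ, true_and] at hz1 ⊢
        have hc : s1 z1 = s2 z2 := funext hz1
        intro v
        exact congrFun (hg2 z1 z2 hc) v
      · intro x hx
        simp only [Finset.mem_filter, Finset.mem_univ, true_and] at hx
        have hx' : r2 x = z2 := funext hx
        exact (congrArg (glue (r1 x)) hx'.symm).trans (hgx (r1 x) x rfl)
      · intro z1 hz1
        exact hg1 z1 z2
      · intro x hx
        simp only [Finset.mem_filter, Finset.mem_univ, true_and] at hx
        have hx' : r2 x = z2 := funext hx
        rw [hmu, hss, hx']
    rw [hbij]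
    rw [← Finset.sum_div, ← Finset.sum_mul, ← h1marg (s2 z2)]
    by_cases h0 : bS (s2 z2) = 0
    · rw [h0, div_zero, hv2 z2 h0]
    · rw [mul_comm, mul_div_assoc, div_self h0, mul_one]
  refine ⟨?_, ?_, key1, key2⟩
  · intro x
    rw [hmu]
    exact div_nonneg (mul_nonneg (h1pos _) (h2pos _)) (hSpos _)
  · have := Finset.sum_fiberwise (Finset.univ : Finset ({v // v ∈ C₁ ∪ C₂} → Bool)) r1
      (jointMu ι C₁ C₂ b1 b2 bS)
    rw [← this, ← h1sum]
    refine Finset.sum_congr rfl fun z1 _ => ?_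
    rw [key1 z1]
    refine Finset.sum_congr ?_ fun _ _ => rfl
    ext x
    simp only [Finset.mem_filter, Finset.mem_univ, true_and]
    constructor
    · intro h; exact h ▸ fun v => rfl
    · intro h; exact funext h
end
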